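/- Fix n ≥ 1, T > 0, and x₀ ∈ ℝⁿ, and let g, h : ℝⁿ → ℝⁿ be globally Lipschitz continuous. Let x̄ : ℝ → ℝⁿ satisfy x̄(0) = x₀ and x̄'(t) = g(x̄(t)) for all t ∈ [0,T], and for each ε ∈ (0,1] let x_ε : ℝ → ℝⁿ satisfy x_ε(0) = x₀ and x_ε'(t) = (1−ε) g(x_ε(t)) + ε h(x_ε(t)) for all t ∈ [0,T]. Then (1/ε) ∫₀ᵀ ‖x_ε(t) − x̄(t)‖² dt tends to 0 as ε → 0⁺ (that is, the map ε ↦ (1/ε) ∫₀ᵀ ‖x_ε(t) − x̄(t)‖² dt tends to 0 along the filter of positive ε approaching 0). -/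

import Mathlib

open Set Real

/-- Linearity/monotonicity bound for the Grönwall bound. -/
lemma gb_lin_mono {K M ε t T : ℝ} (hK : 0 ≤ K) (hM : 0 ≤ M) (hε : 0 ≤ ε)
    (ht : 0 ≤ t) (htT : t ≤ T) :
    gronwallBound 0 K (ε * M) t ≤ ε * gronwallBound 0 K M T := by
  unfold gronwallBound
  split_ifs with hK0
  · simp only [zero_add]
    nlinarith [mul_nonneg (mul_nonneg hε hM) (sub_nonneg.mpr htT)]
  · have hKpos : 0 < K := lt_of_le_of_ne hK (Ne.symm hK0)
    simp only [zero_mul, zero_add]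
    have h1 : (1:ℝ) ≤ exp (K * t) := by
      rw [← Real.exp_zero]; exact Real.exp_le_exp.mpr (by positivity)
    have h2 : exp (K * t) ≤ exp (K * T) := Real.exp_le_exp.mpr (by nlinarith)
    have : ε * M / K * (exp (K * t) - 1) ≤ ε * (M / K * (exp (K * T) - 1)) := by
      rw [show ε * M / K * (exp (K * t) - 1) = ε * (M / K * (exp (K * t) - 1)) by ring]
      gcongr
    linarith

lemma gb_nonneg {K M x : ℝ} (hK : 0 ≤ K) (hM : 0 ≤ M) (hx : 0 ≤ x) :
    0 ≤ gronwallBound 0 K M x := by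
  unfold gronwallBound
  split_ifs with hK0
  · nlinarith
  · have hKpos : 0 < K := lt_of_le_of_ne hK (Ne.symm hK0)
    have h1 : (1:ℝ) ≤ Real.exp (K * x) := by
      rw [← Real.exp_zero]; exact Real.exp_le_exp.mpr (by positivity)
    simp only [zero_mul, zero_add]
    exact mul_nonneg (div_nonneg hM hKpos.le) (by linarith)

lemma lip_combo {E : Type*} [NormedAddCommGroup E] [NormedSpace ℝ E]
    (g h : E → E) (Kg Kh : NNReal) (hg : LipschitzWith Kg g) (hh : LipschitzWith Kh h)
    {ε : ℝ} (h0 : 0 ≤ ε) (h1 : ε ≤ 1) :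
    LipschitzWith (Kg + Kh) (fun x => (1 - ε) • g x + ε • h x) := by
  apply LipschitzWith.of_dist_le_mul
  intro x y
  simp only [dist_eq_norm]
  have heq : ((1 - ε) • g x + ε • h x) - ((1 - ε) • g y + ε • h y)
      = (1 - ε) • (g x - g y) + ε • (h x - h y) := by
    rw [smul_sub, smul_sub]; abel
  rw [heq]
  have hgl : ‖g x - g y‖ ≤ (Kg : ℝ) * ‖x - y‖ := by
    simpa [dist_eq_norm] using hg.dist_le_mul x y
  have hhl : ‖h x - h y‖ ≤ (Kh : ℝ) * ‖x - y‖ := by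
    simpa [dist_eq_norm] using hh.dist_le_mul x y
  calc ‖(1 - ε) • (g x - g y) + ε • (h x - h y)‖
      ≤ ‖(1 - ε) • (g x - g y)‖ + ‖ε • (h x - h y)‖ := norm_add_le _ _
    _ = (1 - ε) * ‖g x - g y‖ + ε * ‖h x - h y‖ := by
        rw [norm_smul, norm_smul, Real.norm_eq_abs, Real.norm_eq_abs,
          abs_of_nonneg (by linarith), abs_of_nonneg h0]
    _ ≤ (Kg : ℝ) * ‖x - y‖ + (Kh : ℝ) * ‖x - y‖ := by
        have hgn : 0 ≤ ‖x - y‖ := norm_nonneg _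
        nlinarith [norm_nonneg (g x - g y), norm_nonneg (h x - h y)]
    _ = ((Kg + Kh : NNReal) : ℝ) * ‖x - y‖ := by push_cast; ring


/-- Key estimate for the nonstandard derivative: with nominal
trajectory `x̄` of `x' = g(x)` and a family `X ε` of solutions of the
`ε`-variational system for `ε ∈ (0,1]`, the quantity
`(1/ε) ∫₀ᵀ ‖X ε t − x̄ t‖² dt` tends to `0` as `ε → 0⁺`. -/
theorem stmt_12 (n : ℕ) (hn : 1 ≤ n) (T : ℝ) (hT : 0 < T)
    (x₀ : EuclideanSpace ℝ (Fin n))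
    (g h : EuclideanSpace ℝ (Fin n) → EuclideanSpace ℝ (Fin n))
    (Kg Kh : NNReal) (hg : LipschitzWith Kg g) (hh : LipschitzWith Kh h)
    (xbar : ℝ → EuclideanSpace ℝ (Fin n))
    (hx0 : xbar 0 = x₀)
    (hxbar : ∀ t ∈ Set.Icc (0 : ℝ) T, HasDerivAt xbar (g (xbar t)) t)
    (X : ℝ → ℝ → EuclideanSpace ℝ (Fin n))
    (hX0 : ∀ ε ∈ Set.Ioc (0 : ℝ) 1, X ε 0 = x₀)
    (hXode : ∀ ε ∈ Set.Ioc (0 : ℝ) 1, ∀ t ∈ Set.Icc (0 : ℝ) T,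
      HasDerivAt (X ε) ((1 - ε) • g (X ε t) + ε • h (X ε t)) t) :
    Filter.Tendsto
      (fun ε : ℝ => (1 / ε) * ∫ t in (0 : ℝ)..T, ‖X ε t - xbar t‖ ^ 2)
      (nhdsWithin 0 (Set.Ioi 0)) (nhds 0) := by
  set C0 : ℝ := ‖g x₀‖ + ‖h x₀‖ with hC0def
  have hC0 : 0 ≤ C0 := by positivity
  set B : ℝ := gronwallBound 0 (Kg + Kh : NNReal) C0 T with hBdef
  have hB : 0 ≤ B := gb_nonneg (Kg + Kh).coe_nonneg hC0 hT.le
  set M : ℝ := ‖h x₀ - g x₀‖ + ((Kg : ℝ) + (Kh : ℝ)) * B with hMdef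
  have hM : 0 ≤ M := by positivity
  set D : ℝ := gronwallBound 0 (Kg : ℝ) M T with hDdef
  -- key pointwise estimate
  have key : ∀ ε ∈ Set.Ioc (0:ℝ) 1, ∀ t ∈ Set.Icc (0:ℝ) T,
      dist (X ε t) (xbar t) ≤ ε * D := by
    intro ε hε t ht
    obtain ⟨hε0, hε1⟩ := hε
    have hεIoc : ε ∈ Set.Ioc (0:ℝ) 1 := ⟨hε0, hε1⟩
    have contX : ContinuousOn (X ε) (Set.Icc 0 T) := fun s hs =>
      ((hXode ε hεIoc s hs).continuousAt).continuousWithinAt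
    have derivX : ∀ s ∈ Set.Ico (0:ℝ) T,
        HasDerivWithinAt (X ε) ((1 - ε) • g (X ε s) + ε • h (X ε s)) (Set.Ici s) s :=
      fun s hs => (hXode ε hεIoc s (Set.Ico_subset_Icc_self hs)).hasDerivWithinAt
    -- Step 1: uniform bound on dist (X ε t) x₀
    have bound1 : ∀ s ∈ Set.Icc (0:ℝ) T, dist (X ε s) x₀ ≤ B := by
      have hlip := lip_combo g h Kg Kh hg hh hε0.le hε1
      have := dist_le_of_approx_trajectories_ODE
        (v := fun _ x => (1 - ε) • g x + ε • h x) (K := Kg + Kh)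
        (f := X ε) (f' := fun s => (1 - ε) • g (X ε s) + ε • h (X ε s))
        (g := fun _ => x₀) (g' := fun _ => 0)
        (εf := 0) (εg := C0) (δ := 0) (a := 0) (b := T)
        (fun _ => hlip) contX derivX
        (fun s hs => by simp)
        continuousOn_const
        (fun s hs => (hasDerivWithinAt_const s _ x₀).congr_deriv rfl)
        (fun s hs => by
          simp only [dist_eq_norm, zero_sub, norm_neg]
          calc ‖(1 - ε) • g x₀ + ε • h x₀‖
              ≤ ‖(1 - ε) • g x₀‖ + ‖ε • h x₀‖ := norm_add_le _ _
            _ = (1 - ε) * ‖g x₀‖ + ε * ‖h x₀‖ := by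
                rw [norm_smul, norm_smul, Real.norm_eq_abs, Real.norm_eq_abs,
                  abs_of_nonneg (by linarith), abs_of_nonneg hε0.le]
            _ ≤ C0 := by
                have := norm_nonneg (g x₀); have := norm_nonneg (h x₀)
                rw [hC0def]; nlinarith)
        (by simp [hX0 ε hεIoc])
      intro s hs
      have h1 := this s hs
      have h2 : gronwallBound 0 ((Kg + Kh : NNReal) : ℝ) (0 + C0) (s - 0)
          ≤ 1 * gronwallBound 0 ((Kg + Kh : NNReal) : ℝ) C0 T := by
        have := gb_lin_mono (K := ((Kg + Kh : NNReal):ℝ)) (M := C0) (ε := 1)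
          (t := s) (T := T) (Kg + Kh).coe_nonneg hC0 zero_le_one hs.1 hs.2
        simpa using this
      rw [one_mul] at h2
      exact h1.trans ((by simpa [hBdef] using h2))
    -- error bound for step 2
    have errbd : ∀ s ∈ Set.Ico (0:ℝ) T,
        dist ((1 - ε) • g (X ε s) + ε • h (X ε s)) (g (X ε s)) ≤ ε * M := by
      intro s hs
      have heq : ((1 - ε) • g (X ε s) + ε • h (X ε s)) - g (X ε s)
          = ε • (h (X ε s) - g (X ε s)) := by
        rw [smul_sub]
        rw [sub_smul, one_smul]
        abel
      rw [dist_eq_norm, heq, norm_smul, Real.norm_eq_abs, abs_of_nonneg hε0.le]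
      have hd : dist (X ε s) x₀ ≤ B := bound1 s (Set.Ico_subset_Icc_self hs)
      have hhx : ‖h (X ε s) - h x₀‖ ≤ (Kh : ℝ) * dist (X ε s) x₀ := by
        simpa [dist_eq_norm] using hh.dist_le_mul (X ε s) x₀
      have hgx : ‖g x₀ - g (X ε s)‖ ≤ (Kg : ℝ) * dist (X ε s) x₀ := by
        rw [norm_sub_rev]
        simpa [dist_eq_norm] using hg.dist_le_mul (X ε s) x₀
      have htriangle : ‖h (X ε s) - g (X ε s)‖
          ≤ ‖h (X ε s) - h x₀‖ + ‖h x₀ - g x₀‖ + ‖g x₀ - g (X ε s)‖ := by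
        have : h (X ε s) - g (X ε s)
            = (h (X ε s) - h x₀) + (h x₀ - g x₀) + (g x₀ - g (X ε s)) := by abel
        rw [this]; exact norm_add₃_le
      have hbound : ‖h (X ε s) - g (X ε s)‖ ≤ M := by
        have hdn : 0 ≤ dist (X ε s) x₀ := dist_nonneg
        rw [hMdef]
        nlinarith [Kg.coe_nonneg, Kh.coe_nonneg]
      exact mul_le_mul_of_nonneg_left hbound hε0.le
    -- Step 2: Grönwall against xbar
    have contxbar : ContinuousOn xbar (Set.Icc 0 T) := fun s hs =>
      ((hxbar s hs).continuousAt).continuousWithinAt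
    have := dist_le_of_approx_trajectories_ODE
      (v := fun _ x => g x) (K := Kg)
      (f := X ε) (f' := fun s => (1 - ε) • g (X ε s) + ε • h (X ε s))
      (g := xbar) (g' := fun s => g (xbar s))
      (εf := ε * M) (εg := 0) (δ := 0) (a := 0) (b := T)
      (fun _ => hg) contX derivX errbd contxbar
      (fun s hs => (hxbar s (Set.Ico_subset_Icc_self hs)).hasDerivWithinAt)
      (fun s hs => by simp)
      (by simp [hX0 ε hεIoc, hx0])
    have h1 := this t ht
    have h2 : gronwallBound 0 (Kg : ℝ) (ε * M + 0) (t - 0) ≤ ε * D := by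
      rw [add_zero, sub_zero, hDdef]
      exact gb_lin_mono Kg.coe_nonneg hM hε0.le ht.1 ht.2
    exact h1.trans h2
  have hD : 0 ≤ D := gb_nonneg Kg.coe_nonneg hM hT.le
  -- integral bound
  have intbd : ∀ ε ∈ Set.Ioc (0:ℝ) 1,
      (1 / ε) * ∫ t in (0:ℝ)..T, ‖X ε t - xbar t‖ ^ 2 ≤ ε * (D ^ 2 * T) := by
    intro ε hε
    have hεIoc := hε
    obtain ⟨hε0, hε1⟩ := hε
    have contd : ContinuousOn (fun t => ‖X ε t - xbar t‖ ^ 2) (Set.Icc 0 T) := by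
      apply ContinuousOn.pow
      apply ContinuousOn.norm
      exact ContinuousOn.sub
        (fun s hs => ((hXode ε hεIoc s hs).continuousAt).continuousWithinAt)
        (fun s hs => ((hxbar s hs).continuousAt).continuousWithinAt)
    have hint : IntervalIntegrable (fun t => ‖X ε t - xbar t‖ ^ 2)
        MeasureTheory.volume 0 T := by
      apply ContinuousOn.intervalIntegrable
      rwa [Set.uIcc_of_le hT.le]
    have hmono : ∫ t in (0:ℝ)..T, ‖X ε t - xbar t‖ ^ 2
        ≤ ∫ _t in (0:ℝ)..T, (ε * D) ^ 2 := by
      apply intervalIntegral.integral_mono_on hT.le hint intervalIntegrable_const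
      intro s hs
      have := key ε hεIoc s hs
      rw [dist_eq_norm] at this
      have hnn : 0 ≤ ‖X ε s - xbar s‖ := norm_nonneg _
      nlinarith
    have hval : (∫ _t in (0:ℝ)..T, (ε * D) ^ 2) = (ε * D) ^ 2 * T := by
      simp [mul_comm]
    rw [hval] at hmono
    have : (1 / ε) * ∫ t in (0:ℝ)..T, ‖X ε t - xbar t‖ ^ 2
        ≤ (1 / ε) * ((ε * D) ^ 2 * T) := by
      exact mul_le_mul_of_nonneg_left hmono (one_div_nonneg.mpr hε0.le)
    calc (1 / ε) * ∫ t in (0:ℝ)..T, ‖X ε t - xbar t‖ ^ 2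
        ≤ (1 / ε) * ((ε * D) ^ 2 * T) := this
      _ = ε * (D ^ 2 * T) := by field_simp
  -- squeeze
  have hupper : Filter.Tendsto (fun ε : ℝ => ε * (D ^ 2 * T))
      (nhdsWithin 0 (Set.Ioi 0)) (nhds 0) := by
    have : Filter.Tendsto (fun ε : ℝ => ε * (D ^ 2 * T)) (nhds 0) (nhds 0) := by
      have := (continuous_id.mul (continuous_const (y := D ^ 2 * T))).tendsto 0
      convert this using 2 <;> simp
    exact this.mono_left nhdsWithin_le_nhds
  have hmem : Set.Ioc (0:ℝ) 1 ∈ nhdsWithin 0 (Set.Ioi 0) :=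
    Ioc_mem_nhdsGT_of_mem (by norm_num)
  apply tendsto_of_tendsto_of_tendsto_of_le_of_le' tendsto_const_nhds hupper
  · filter_upwards [hmem] with ε hε
    apply mul_nonneg (one_div_nonneg.mpr hε.1.le)
    apply intervalIntegral.integral_nonneg hT.le
    intro u hu; positivity
  · filter_upwards [hmem] with ε hε
    exact intbd ε hε
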